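/- For n ≥ 0 and n ≤ k ≤ 3n, with η := k - n, E_2(n,k) = Σ_{c=max(0, η-n)}^{⌊η/2⌋} k! / ((n-η+c)! · (η-2c)! · c! · 2^{η-c} · 3^c). -/

import Mathlib

open Finset
open scoped Classical in
noncomputable def Tset {α : Type*} [DecidableEq α] (s : Finset α) (a b c : ℕ) :
    Finset (Finpartition s) :=
  Finset.univ.filter fun P =>
    #{p ∈ P.parts | p.card = 1} = a ∧ #{p ∈ P.parts | p.card = 2} = b ∧
    #{p ∈ P.parts | p.card = 3} = c ∧ ∀ p ∈ P.parts, p.card ≤ 3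

lemma mem_Tset {α : Type*} [DecidableEq α] {s : Finset α} {a b c : ℕ}
    {P : Finpartition s} :
    P ∈ Tset s a b c ↔
      #{p ∈ P.parts | p.card = 1} = a ∧ #{p ∈ P.parts | p.card = 2} = b ∧
      #{p ∈ P.parts | p.card = 3} = c ∧ ∀ p ∈ P.parts, p.card ≤ 3 := by
  classical
  simp [Tset]

lemma avoid_parts_of_mem {α : Type*} [DecidableEq α] {s B : Finset α}
    {P : Finpartition s} (hB : B ∈ P.parts) :
    (P.avoid B).parts = P.parts.erase B := by
  ext C
  rw [Finpartition.mem_avoid]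
  constructor
  · rintro ⟨d, hd, hdB, rfl⟩
    have hne : d ≠ B := fun h => hdB (h ▸ le_refl _)
    have hdis : Disjoint d B := P.disjoint hd hB hne
    rw [Finset.sdiff_eq_self_of_disjoint hdis]
    exact mem_erase.2 ⟨hne, hd⟩
  · intro hC
    obtain ⟨hne, hC'⟩ := mem_erase.1 hC
    have hdis : Disjoint C B := P.disjoint hC' hB hne
    refine ⟨C, hC', ?_, Finset.sdiff_eq_self_of_disjoint hdis⟩
    intro hle
    exact P.bot_notMem (by simpa [hdis.eq_bot_of_le hle] using hC')

lemma count_erase {α : Type*} [DecidableEq α] {B : Finset α}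
    {parts : Finset (Finset α)} (hB : B ∈ parts) (j : ℕ) :
    #{p ∈ parts.erase B | p.card = j} + (if B.card = j then 1 else 0)
      = #{p ∈ parts | p.card = j} := by
  rw [Finset.filter_erase]
  by_cases h : B.card = j
  · have hmem : B ∈ {p ∈ parts | p.card = j} := mem_filter.2 ⟨hB, h⟩
    have hpos : 0 < #{p ∈ parts | p.card = j} := card_pos.2 ⟨B, hmem⟩
    rw [Finset.card_erase_of_mem hmem]
    simp only [h, if_pos]
    omega
  · rw [Finset.erase_eq_of_notMem (by simp [h])]
    simp [h]

lemma fiber_card {α : Type*} [DecidableEq α] {s : Finset α} {x : α} {B : Finset α}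
    (hBs : B ⊆ s) (hxB : x ∈ B) (hB3 : B.card ≤ 3) (a b c a' b' c' : ℕ)
    (h1 : a = a' + if B.card = 1 then 1 else 0)
    (h2 : b = b' + if B.card = 2 then 1 else 0)
    (h3 : c = c' + if B.card = 3 then 1 else 0) :
    #((Tset s a b c).filter fun P => P.part x = B) = #(Tset (s \ B) a' b' c') := by
  classical
  have hxs : x ∈ s := hBs hxB
  have hBne : B ≠ ⊥ := by
    intro h; rw [h] at hxB; exact absurd hxB (by simp)
  have hdisj : Disjoint (s \ B) B := sdiff_disjoint
  have hsup : (s \ B) ⊔ B = s := sdiff_sup_cancel (le_iff_subset.2 hBs)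
  apply Finset.card_bij (fun P _ => P.avoid B)
  · -- maps into target
    rintro P hP
    rw [mem_filter] at hP
    obtain ⟨hPT, hpart⟩ := hP
    rw [mem_Tset] at hPT
    obtain ⟨ha, hb, hc, hle⟩ := hPT
    have hBmem : B ∈ P.parts := hpart ▸ P.part_mem.2 hxs
    have hparts : (P.avoid B).parts = P.parts.erase B := avoid_parts_of_mem hBmem
    rw [mem_Tset, hparts]
    refine ⟨?_, ?_, ?_, fun p hp => hle p (mem_of_mem_erase hp)⟩
    · have := count_erase hBmem 1; omega
    · have := count_erase hBmem 2; omega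
    · have := count_erase hBmem 3; omega
  · -- injective
    rintro P1 hP1 P2 hP2 heq
    rw [mem_filter] at hP1 hP2
    have hB1 : B ∈ P1.parts := hP1.2 ▸ P1.part_mem.2 hxs
    have hB2 : B ∈ P2.parts := hP2.2 ▸ P2.part_mem.2 hxs
    have := congrArg Finpartition.parts heq
    rw [avoid_parts_of_mem hB1, avoid_parts_of_mem hB2] at this
    ext1
    rw [← Finset.insert_erase hB1, ← Finset.insert_erase hB2, this]
  · -- surjective
    rintro Q hQ
    rw [mem_Tset] at hQ
    obtain ⟨ha', hb', hc', hle'⟩ := hQ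
    have hBnotin : B ∉ Q.parts := by
      intro h
      have := Q.le h
      have : x ∈ s \ B := this hxB
      simp [hxB] at this
    refine ⟨Q.extend hBne hdisj hsup, ?_, ?_⟩
    · have hparts : (Q.extend hBne hdisj hsup).parts = insert B Q.parts := rfl
      rw [mem_filter, mem_Tset, hparts]
      have count_ins : ∀ j : ℕ, #{p ∈ insert B Q.parts | p.card = j}
          = #{p ∈ Q.parts | p.card = j} + (if B.card = j then 1 else 0) := by
        intro j
        rw [Finset.filter_insert]
        by_cases h : B.card = j
        · rw [if_pos h, Finset.card_insert_of_notMem (by simp [hBnotin]), if_pos h]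
        · rw [if_neg h, if_neg h, add_zero]
      refine ⟨⟨?_, ?_, ?_, ?_⟩, ?_⟩
      · rw [count_ins 1]; omega
      · rw [count_ins 2]; omega
      · rw [count_ins 3]; omega
      · intro p hp
        rcases Finset.mem_insert.1 hp with h | hp
        · exact h ▸ hB3
        · exact hle' p hp
      · exact Finpartition.part_eq_of_mem (P := Q.extend hBne hdisj hsup)
          (Finset.mem_insert_self B Q.parts) hxB
    · have hBmem : B ∈ (Q.extend hBne hdisj hsup).parts := Finset.mem_insert_self _ _
      ext1
      rw [avoid_parts_of_mem hBmem]
      show (insert B Q.parts).erase B = Q.parts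
      rw [Finset.erase_insert hBnotin]
lemma card_sum {α : Type*} [DecidableEq α] {s : Finset α} (P : Finpartition s)
    (h3 : ∀ p ∈ P.parts, p.card ≤ 3) :
    s.card = #{p ∈ P.parts | p.card = 1} + 2 * #{p ∈ P.parts | p.card = 2}
      + 3 * #{p ∈ P.parts | p.card = 3} ∧
    P.parts.card = #{p ∈ P.parts | p.card = 1} + #{p ∈ P.parts | p.card = 2}
      + #{p ∈ P.parts | p.card = 3} := by
  classical
  have hge : ∀ p ∈ P.parts, 1 ≤ p.card := fun p hp =>
    Finset.card_pos.2 (P.nonempty_of_mem_parts hp)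
  have hsplit : P.parts = {p ∈ P.parts | p.card = 1} ∪ {p ∈ P.parts | p.card = 2}
      ∪ {p ∈ P.parts | p.card = 3} := by
    ext p
    simp only [mem_union, mem_filter]
    constructor
    · intro hp
      have h1 := hge p hp
      have h2 := h3 p hp
      have : p.card = 1 ∨ p.card = 2 ∨ p.card = 3 := by omega
      tauto
    · rintro ((⟨h, _⟩ | ⟨h, _⟩) | ⟨h, _⟩) <;> exact h
  have d12 : Disjoint {p ∈ P.parts | p.card = 1} {p ∈ P.parts | p.card = 2} := by
    simp only [disjoint_left, mem_filter]; rintro p ⟨_, h1⟩ ⟨_, h2⟩; omega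
  have d123 : Disjoint ({p ∈ P.parts | p.card = 1} ∪ {p ∈ P.parts | p.card = 2})
      {p ∈ P.parts | p.card = 3} := by
    simp only [disjoint_left, mem_union, mem_filter]
    rintro p (⟨_, h1⟩ | ⟨_, h2⟩) ⟨_, h3'⟩ <;> omega
  have hsum : ∀ j : ℕ, ∑ p ∈ {p ∈ P.parts | p.card = j}, p.card
      = j * #{p ∈ P.parts | p.card = j} := by
    intro j
    rw [Finset.sum_congr rfl (fun p hp => (mem_filter.1 hp).2), Finset.sum_const,
      smul_eq_mul, mul_comm]
  constructor
  · rw [← P.sum_card_parts]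
    nth_rewrite 1 [hsplit]
    rw [Finset.sum_union d123, Finset.sum_union d12, hsum 1, hsum 2, hsum 3]
    ring
  · nth_rewrite 1 [hsplit]
    rw [Finset.card_union_of_disjoint d123, Finset.card_union_of_disjoint d12]

noncomputable def M (a b c : ℕ) : ℚ :=
  (a + 2*b + 3*c).factorial /
    (a.factorial * b.factorial * c.factorial * 2 ^ b * 6 ^ c)

lemma M_t1 {a b c : ℕ} (ha : a ≠ 0) :
    M (a-1) b c = (a : ℚ) / (a+2*b+3*c) * M a b c := by
  obtain ⟨a', rfl⟩ := Nat.exists_eq_succ_of_ne_zero ha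
  simp only [M, Nat.succ_sub_one]
  have e1 : a'+1+2*b+3*c = (a'+2*b+3*c)+1 := by ring
  rw [e1, Nat.factorial_succ (a'+2*b+3*c), Nat.factorial_succ a']
  have h1 : ((a'+2*b+3*c).factorial : ℚ) ≠ 0 := Nat.cast_ne_zero.2 (Nat.factorial_ne_zero _)
  have h2 : ((a').factorial : ℚ) ≠ 0 := Nat.cast_ne_zero.2 (Nat.factorial_ne_zero _)
  have h3 : ((b).factorial : ℚ) ≠ 0 := Nat.cast_ne_zero.2 (Nat.factorial_ne_zero _)
  have h4 : ((c).factorial : ℚ) ≠ 0 := Nat.cast_ne_zero.2 (Nat.factorial_ne_zero _)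
  have h5 : (2:ℚ)^b ≠ 0 := by positivity
  have h6 : (6:ℚ)^c ≠ 0 := by positivity
  have h7 : ((a':ℚ)+1+2*b+3*c) ≠ 0 := by positivity
  push_cast
  field_simp
  ring

lemma M_t2 {a b c : ℕ} (hb : b ≠ 0) :
    ((a+2*b+3*c-1 : ℕ) : ℚ) * M a (b-1) c = (2*b : ℚ) / (a+2*b+3*c) * M a b c := by
  obtain ⟨b', rfl⟩ := Nat.exists_eq_succ_of_ne_zero hb
  simp only [M, Nat.succ_sub_one]
  have e0 : a+2*(b'+1)+3*c-1 = (a+2*b'+3*c)+1 := by omega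
  have e1 : a+2*(b'+1)+3*c = ((a+2*b'+3*c)+1)+1 := by ring
  rw [e0, e1, Nat.factorial_succ ((a+2*b'+3*c)+1), Nat.factorial_succ (a+2*b'+3*c),
    Nat.factorial_succ b', pow_succ]
  have h1 : ((a+2*b'+3*c).factorial : ℚ) ≠ 0 := Nat.cast_ne_zero.2 (Nat.factorial_ne_zero _)
  have h2 : ((a).factorial : ℚ) ≠ 0 := Nat.cast_ne_zero.2 (Nat.factorial_ne_zero _)
  have h3 : ((b').factorial : ℚ) ≠ 0 := Nat.cast_ne_zero.2 (Nat.factorial_ne_zero _)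
  have h4 : ((c).factorial : ℚ) ≠ 0 := Nat.cast_ne_zero.2 (Nat.factorial_ne_zero _)
  have h5 : (2:ℚ)^b' ≠ 0 := by positivity
  have h6 : (6:ℚ)^c ≠ 0 := by positivity
  have h7 : ((a:ℚ)+2*b'+3*c+1+1) ≠ 0 := by positivity
  push_cast
  field_simp
  ring

lemma M_t3 {a b c : ℕ} (hc : c ≠ 0) :
    (((a+2*b+3*c-1 : ℕ).choose 2 : ℕ) : ℚ) * M a b (c-1)
      = (3*c : ℚ) / (a+2*b+3*c) * M a b c := by
  obtain ⟨c', rfl⟩ := Nat.exists_eq_succ_of_ne_zero hc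
  simp only [M, Nat.succ_sub_one]
  rw [Nat.cast_choose_two]
  have e0 : a+2*b+3*(c'+1)-1 = (a+2*b+3*c')+2 := by omega
  have e1 : a+2*b+3*(c'+1) = ((a+2*b+3*c')+2)+1 := by ring
  rw [e0, e1, Nat.factorial_succ, Nat.factorial_succ, Nat.factorial_succ (a+2*b+3*c'),
    Nat.factorial_succ c', pow_succ]
  have h1 : ((a+2*b+3*c').factorial : ℚ) ≠ 0 := Nat.cast_ne_zero.2 (Nat.factorial_ne_zero _)
  have h2 : ((a).factorial : ℚ) ≠ 0 := Nat.cast_ne_zero.2 (Nat.factorial_ne_zero _)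
  have h3 : ((b).factorial : ℚ) ≠ 0 := Nat.cast_ne_zero.2 (Nat.factorial_ne_zero _)
  have h4 : ((c').factorial : ℚ) ≠ 0 := Nat.cast_ne_zero.2 (Nat.factorial_ne_zero _)
  have h5 : (2:ℚ)^b ≠ 0 := by positivity
  have h6 : (6:ℚ)^c' ≠ 0 := by positivity
  have h7 : ((a:ℚ)+2*b+3*c'+2+1) ≠ 0 := by positivity
  push_cast
  field_simp
  ring

lemma Mrec {a b c N : ℕ} (hN : N = a+2*b+3*c) (h0 : N ≠ 0) :
    M a b c = (if a = 0 then 0 else M (a-1) b c)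
      + ((N-1 : ℕ) : ℚ) * (if b = 0 then 0 else M a (b-1) c)
      + (((N-1 : ℕ).choose 2 : ℕ) : ℚ) * (if c = 0 then 0 else M a b (c-1)) := by
  subst hN
  have hNQ : ((a:ℚ)+2*b+3*c) ≠ 0 := by
    have h1 : ((a+2*b+3*c : ℕ) : ℚ) ≠ 0 := Nat.cast_ne_zero.2 h0
    push_cast at h1
    exact h1
  have e1 : (if a = 0 then 0 else M (a-1) b c) = (a:ℚ)/((a:ℚ)+2*b+3*c) * M a b c := by
    by_cases h : a = 0
    · simp [h]
    · rw [if_neg h, M_t1 h]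
  have e2 : ((a+2*b+3*c-1 : ℕ) : ℚ) * (if b = 0 then 0 else M a (b-1) c)
      = (2*(b:ℚ))/((a:ℚ)+2*b+3*c) * M a b c := by
    by_cases h : b = 0
    · simp [h]
    · rw [if_neg h, M_t2 h]
  have e3 : (((a+2*b+3*c-1 : ℕ).choose 2 : ℕ) : ℚ) * (if c = 0 then 0 else M a b (c-1))
      = (3*(c:ℚ))/((a:ℚ)+2*b+3*c) * M a b c := by
    by_cases h : c = 0
    · simp [h]
    · rw [if_neg h, M_t3 h]
  rw [e1, e2, e3]
  field_simp

lemma Dcard {α : Type*} [DecidableEq α] {s : Finset α} {x : α} (hx : x ∈ s) {j : ℕ} (hj : 1 ≤ j) :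
    #{B ∈ s.powerset | x ∈ B ∧ B.card = j} = (s.card - 1).choose (j-1) := by
  rw [← Finset.card_erase_of_mem hx, ← Finset.card_powersetCard (j-1) (s.erase x)]
  apply Finset.card_bij (fun B _ => B.erase x)
  · rintro B hB
    obtain ⟨hBs, hxB, hcard⟩ := by
      simpa only [mem_filter, mem_powerset] using hB
    rw [Finset.mem_powersetCard]
    exact ⟨Finset.erase_subset_erase x hBs, by rw [Finset.card_erase_of_mem hxB, hcard]⟩
  · rintro B1 hB1 B2 hB2 heq
    obtain ⟨_, hxB1, _⟩ := by simpa only [mem_filter, mem_powerset] using hB1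
    obtain ⟨_, hxB2, _⟩ := by simpa only [mem_filter, mem_powerset] using hB2
    rw [← Finset.insert_erase hxB1, ← Finset.insert_erase hxB2, heq]
  · rintro C hC
    obtain ⟨hCs, hCcard⟩ := Finset.mem_powersetCard.1 hC
    have hxC : x ∉ C := fun h => (Finset.mem_erase.1 (hCs h)).1 rfl
    refine ⟨insert x C, ?_, Finset.erase_insert hxC⟩
    simp only [mem_filter, mem_powerset]
    refine ⟨Finset.insert_subset hx (hCs.trans (Finset.erase_subset x s)), Finset.mem_insert_self _ _, ?_⟩
    rw [Finset.card_insert_of_notMem hxC, hCcard]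
    omega

lemma Tset_card_eq_M {α : Type*} [DecidableEq α] : ∀ (N : ℕ) (s : Finset α), s.card = N →
    ∀ a b c : ℕ, N = a + 2*b + 3*c → ((Tset s a b c).card : ℚ) = M a b c := by
  intro N
  induction N using Nat.strong_induction_on with
  | _ N IH =>
  intro s hs a b c hN
  rcases Nat.eq_zero_or_pos N with h0 | hpos
  · subst h0
    obtain rfl : a = 0 := by omega
    obtain rfl : b = 0 := by omega
    obtain rfl : c = 0 := by omega
    have hse : s = ∅ := card_eq_zero.1 hs
    subst hse
    have hparts : ∀ P : Finpartition (∅ : Finset α), P.parts = ∅ := fun P =>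
      Finpartition.parts_eq_empty_iff.2 Finset.bot_eq_empty.symm
    have h1 : Tset (∅ : Finset α) 0 0 0 = Finset.univ := by
      apply Finset.eq_univ_of_forall
      intro P
      rw [mem_Tset, hparts P]
      simp
    rw [h1, Finset.card_univ]
    have h2 : Fintype.card (Finpartition (∅ : Finset α)) = 1 := by
      rw [Fintype.card_eq_one_iff]
      refine ⟨Classical.arbitrary _, fun Q => ?_⟩
      ext1
      rw [hparts, hparts]
    rw [h2]
    simp [M]
  · obtain ⟨x, hx⟩ := card_pos.1 (hs ▸ hpos)
    classical
    set D := {B ∈ s.powerset | x ∈ B ∧ B.card ≤ 3} with hD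
    have hfib : (Tset s a b c).card
        = ∑ B ∈ D, #((Tset s a b c).filter fun P => P.part x = B) := by
      apply Finset.card_eq_sum_card_fiberwise
      intro P hP
      obtain ⟨ha, hb, hc, hle⟩ := mem_Tset.1 hP
      simp only [hD, mem_coe, mem_filter, mem_powerset]
      exact ⟨P.le (P.part_mem.2 hx), P.mem_part hx, hle _ (P.part_mem.2 hx)⟩
    have hval1 : ∀ B ∈ D, B.card = 1 →
        (#((Tset s a b c).filter fun P => P.part x = B) : ℚ)
          = if a = 0 then 0 else M (a-1) b c := by
      rintro B hBD hj
      obtain ⟨hBs, hxB, hB3⟩ := by simpa only [hD, mem_filter, mem_powerset] using hBD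
      by_cases ha0 : a = 0
      · rw [if_pos ha0]
        norm_cast
        rw [Finset.card_eq_zero, Finset.eq_empty_iff_forall_notMem]
        intro P hP
        obtain ⟨hPT, hpart⟩ := mem_filter.1 hP
        obtain ⟨ha1, _, _, _⟩ := mem_Tset.1 hPT
        have hmem : B ∈ P.parts := hpart ▸ P.part_mem.2 hx
        have hmf : B ∈ {p ∈ P.parts | p.card = 1} := mem_filter.2 ⟨hmem, hj⟩
        have := card_pos.2 ⟨_, hmf⟩
        omega
      · rw [if_neg ha0]
        rw [fiber_card hBs hxB hB3 a b c (a-1) b c (by rw [hj]; simp; omega)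
          (by rw [hj]; simp) (by rw [hj]; simp)]
        exact IH (N-1) (by omega) _ (by rw [card_sdiff_of_subset hBs, hs, hj]) _ _ _ (by omega)
    have hval2 : ∀ B ∈ D, B.card = 2 →
        (#((Tset s a b c).filter fun P => P.part x = B) : ℚ)
          = if b = 0 then 0 else M a (b-1) c := by
      rintro B hBD hj
      obtain ⟨hBs, hxB, hB3⟩ := by simpa only [hD, mem_filter, mem_powerset] using hBD
      by_cases hb0 : b = 0
      · rw [if_pos hb0]
        norm_cast
        rw [Finset.card_eq_zero, Finset.eq_empty_iff_forall_notMem]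
        intro P hP
        obtain ⟨hPT, hpart⟩ := mem_filter.1 hP
        obtain ⟨_, hb1, _, _⟩ := mem_Tset.1 hPT
        have hmem : B ∈ P.parts := hpart ▸ P.part_mem.2 hx
        have hmf : B ∈ {p ∈ P.parts | p.card = 2} := mem_filter.2 ⟨hmem, hj⟩
        have := card_pos.2 ⟨_, hmf⟩
        omega
      · rw [if_neg hb0]
        rw [fiber_card hBs hxB hB3 a b c a (b-1) c (by rw [hj]; simp)
          (by rw [hj]; simp; omega) (by rw [hj]; simp)]
        exact IH (N-2) (by omega) _ (by rw [card_sdiff_of_subset hBs, hs, hj]) _ _ _ (by omega)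
    have hval3 : ∀ B ∈ D, B.card = 3 →
        (#((Tset s a b c).filter fun P => P.part x = B) : ℚ)
          = if c = 0 then 0 else M a b (c-1) := by
      rintro B hBD hj
      obtain ⟨hBs, hxB, hB3⟩ := by simpa only [hD, mem_filter, mem_powerset] using hBD
      by_cases hc0 : c = 0
      · rw [if_pos hc0]
        norm_cast
        rw [Finset.card_eq_zero, Finset.eq_empty_iff_forall_notMem]
        intro P hP
        obtain ⟨hPT, hpart⟩ := mem_filter.1 hP
        obtain ⟨_, _, hc1, _⟩ := mem_Tset.1 hPT
        have hmem : B ∈ P.parts := hpart ▸ P.part_mem.2 hx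
        have hmf : B ∈ {p ∈ P.parts | p.card = 3} := mem_filter.2 ⟨hmem, hj⟩
        have := card_pos.2 ⟨_, hmf⟩
        omega
      · rw [if_neg hc0]
        rw [fiber_card hBs hxB hB3 a b c a b (c-1) (by rw [hj]; simp)
          (by rw [hj]; simp) (by rw [hj]; simp; omega)]
        exact IH (N-3) (by omega) _ (by rw [card_sdiff_of_subset hBs, hs, hj]) _ _ _ (by omega)
    have hDsplit : D = {B ∈ D | B.card = 1} ∪ {B ∈ D | B.card = 2} ∪ {B ∈ D | B.card = 3} := by
      ext B
      simp only [mem_union, mem_filter]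
      constructor
      · intro hB
        obtain ⟨hBs, hxB, hB3⟩ := by simpa only [hD, mem_filter, mem_powerset] using hB
        have h1 : 1 ≤ B.card := card_pos.2 ⟨x, hxB⟩
        have : B.card = 1 ∨ B.card = 2 ∨ B.card = 3 := by omega
        tauto
      · rintro ((⟨h,_⟩|⟨h,_⟩)|⟨h,_⟩) <;> exact h
    have d12 : Disjoint {B ∈ D | B.card = 1} {B ∈ D | B.card = 2} := by
      simp only [disjoint_left, mem_filter]
      rintro B ⟨_, h1⟩ ⟨_, h2⟩
      omega
    have d123 : Disjoint ({B ∈ D | B.card = 1} ∪ {B ∈ D | B.card = 2}) {B ∈ D | B.card = 3} := by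
      simp only [disjoint_left, mem_union, mem_filter]
      rintro B (⟨_,h⟩|⟨_,h⟩) ⟨_,h3⟩ <;> omega
    have hDj : ∀ j : ℕ, 1 ≤ j → j ≤ 3 → #{B ∈ D | B.card = j} = (N-1).choose (j-1) := by
      intro j hj hj3
      have he : {B ∈ D | B.card = j} = {B ∈ s.powerset | x ∈ B ∧ B.card = j} := by
        ext B
        simp only [hD, mem_filter, mem_powerset]
        constructor
        · rintro ⟨⟨h1,h2,h3⟩,h4⟩; exact ⟨h1,h2,h4⟩
        · rintro ⟨h1,h2,h4⟩; exact ⟨⟨h1,h2, by omega⟩, h4⟩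
      rw [he, Dcard hx hj, hs]
    have cast1 : ((Tset s a b c).card : ℚ)
        = ∑ B ∈ D, (#((Tset s a b c).filter fun P => P.part x = B) : ℚ) := by
      rw [hfib]
      push_cast
      rfl
    rw [cast1, hDsplit, Finset.sum_union d123, Finset.sum_union d12,
      Finset.sum_congr rfl (fun B hB => hval1 B (mem_filter.1 hB).1 (mem_filter.1 hB).2),
      Finset.sum_congr rfl (fun B hB => hval2 B (mem_filter.1 hB).1 (mem_filter.1 hB).2),
      Finset.sum_congr rfl (fun B hB => hval3 B (mem_filter.1 hB).1 (mem_filter.1 hB).2),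
      Finset.sum_const, Finset.sum_const, Finset.sum_const,
      hDj 1 (by norm_num) (by norm_num), hDj 2 (by norm_num) (by norm_num),
      hDj 3 (by norm_num) (by norm_num), Mrec hN (by omega)]
    simp only [nsmul_eq_mul, Nat.choose_self, Nat.choose_one_right]
    norm_num

/-- `E σ n k` is the number of set partitions of `{1,...,k}` into exactly `n`
nonempty blocks, each of size at most `σ + 1`. -/
noncomputable def E (σ n k : ℕ) : ℕ :=
  Nat.card {P : Finpartition (Finset.univ : Finset (Fin k)) //
    P.parts.card = n ∧ ∀ p ∈ P.parts, p.card ≤ σ + 1}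

/-- `G σ n = ∑_{k=n}^{(σ+1)n} E σ n k`. -/
noncomputable def G (σ n : ℕ) : ℕ := ∑ k ∈ Finset.Icc n ((σ + 1) * n), E σ n k

theorem stmt_14 (n k : ℕ) (h1 : n ≤ k) (h2 : k ≤ 3 * n) :
    (E 2 n k : ℚ) = ∑ c ∈ Finset.Icc ((k - n) - n) ((k - n) / 2),
      (k.factorial : ℚ) /
        ((n + c - (k - n)).factorial * ((k - n) - 2 * c).factorial * c.factorial *
          2 ^ ((k - n) - c) * 3 ^ c) := by
  classical
  have hcu : (Finset.univ : Finset (Fin k)).card = k := by simp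
  set pred : Finpartition (Finset.univ : Finset (Fin k)) → Prop :=
    fun P => P.parts.card = n ∧ ∀ p ∈ P.parts, p.card ≤ 2 + 1 with hpred
  have hE : E 2 n k = (Finset.univ.filter pred).card := by
    rw [E, Nat.card_eq_fintype_card, Fintype.card_subtype]
  have H : ∀ P ∈ Finset.univ.filter pred,
      #{p ∈ P.parts | p.card = 3} ∈ Finset.Icc ((k - n) - n) ((k - n) / 2) := by
    intro P hP
    obtain ⟨hn, hle⟩ := (mem_filter.1 hP).2
    obtain ⟨hk', hn'⟩ := card_sum P hle
    rw [hcu] at hk'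
    rw [hn] at hn'
    rw [mem_Icc]
    omega
  have hfib : (Finset.univ.filter pred).card
      = ∑ c ∈ Finset.Icc ((k - n) - n) ((k - n) / 2),
          #((Finset.univ.filter pred).filter
            fun P => #{p ∈ P.parts | p.card = 3} = c) :=
    Finset.card_eq_sum_card_fiberwise H
  have hfeq : ∀ c ∈ Finset.Icc ((k - n) - n) ((k - n) / 2),
      (Finset.univ.filter pred).filter (fun P => #{p ∈ P.parts | p.card = 3} = c)
        = Tset Finset.univ (n + c - (k - n)) ((k - n) - 2*c) c := by
    intro c hc
    rw [mem_Icc] at hc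
    ext P
    rw [mem_filter, mem_filter, mem_Tset, hpred]
    constructor
    · rintro ⟨⟨-, hn, hle⟩, hc3⟩
      obtain ⟨hk', hn'⟩ := card_sum P (fun p hp => by have := hle p hp; omega)
      rw [hcu] at hk'
      rw [hn] at hn'
      rw [hc3] at hk' hn'
      refine ⟨by omega, by omega, hc3, fun p hp => by have := hle p hp; omega⟩
    · rintro ⟨ha, hb, hc3, hle⟩
      obtain ⟨hk', hn'⟩ := card_sum P (fun p hp => by have := hle p hp; omega)
      rw [hcu] at hk'
      rw [ha, hb, hc3] at hk' hn'
      exact ⟨⟨Finset.mem_univ P, by omega, fun p hp => by have := hle p hp; omega⟩, hc3⟩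
  have hM : ∀ c ∈ Finset.Icc ((k - n) - n) ((k - n) / 2),
      M (n + c - (k - n)) ((k - n) - 2*c) c
        = (k.factorial : ℚ) /
          ((n + c - (k - n)).factorial * ((k - n) - 2 * c).factorial * c.factorial *
            2 ^ ((k - n) - c) * 3 ^ c) := by
    intro c hc
    rw [mem_Icc] at hc
    rw [M]
    have e1 : (n + c - (k - n)) + 2*((k - n) - 2*c) + 3*c = k := by omega
    rw [e1]
    congr 1
    have e2 : (2:ℚ)^((k - n) - c) = 2^((k - n) - 2*c) * 2^c := by
      rw [← pow_add]
      congr 1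
      omega
    rw [show (6:ℚ)^c = 2^c * 3^c by rw [← mul_pow]; norm_num, e2]
    ring
  calc (E 2 n k : ℚ)
      = ∑ c ∈ Finset.Icc ((k - n) - n) ((k - n) / 2),
          ((Tset (Finset.univ : Finset (Fin k)) (n + c - (k - n)) ((k - n) - 2*c) c).card : ℚ) := by
        rw [hE, hfib]
        push_cast
        exact Finset.sum_congr rfl fun c hc => by rw [hfeq c hc]
    _ = _ := by
        refine Finset.sum_congr rfl fun c hc => ?_
        rw [Tset_card_eq_M k Finset.univ hcu _ _ _ (by rw [mem_Icc] at hc; omega), hM c hc]
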